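/- If some p_{i_0} = 1 with 3 ≤ i_0 ≤ k (and the other p_i are arbitrary positive integers), then the generalized Frame-Stewart number with unit q-weights satisfies G^1_k(n) = n for all n ≥ 0. -/
import Mathlib


/-- If some p_{i₀} = 1 with 3 ≤ i₀ ≤ k, then G^1_k(n) = n for all n ≥ 0. -/
theorem generalized_frame_stewart_some_p_one
    (p : ℕ → ℕ) (hp : ∀ i, 1 ≤ p i)
    (k : ℕ) (hk : 3 ≤ k)
    (i₀ : ℕ) (hi₀ : 3 ≤ i₀) (hi₀k : i₀ ≤ k) (hpi₀ : p i₀ = 1)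
    (G1 : ℕ → ℕ → ℕ)
    (hG10 : ∀ k', G1 k' 0 = 0)
    (hG13 : ∀ n, 1 ≤ n → G1 3 n = p 3 * G1 3 (n - 1) + 1)
    (hG1k : ∀ k', 4 ≤ k' → ∀ n, 1 ≤ n →
      G1 k' n = sInf {v | ∃ t, 1 ≤ t ∧ t ≤ n ∧ v = p k' * G1 k' (n - t) + G1 (k' - 1) t})
    (n : ℕ) :
    G1 k n = n := by
  -- Lower bound for k' = 3
  have low3 : ∀ m, m ≤ G1 3 m := by
    intro m
    induction m using Nat.strong_induction_on with
    | _ m ih =>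
      rcases Nat.eq_zero_or_pos m with h | h
      · simp [h, hG10]
      · rw [hG13 m h]
        have h1 : m - 1 ≤ G1 3 (m - 1) := ih (m - 1) (by omega)
        have h2 : G1 3 (m - 1) ≤ p 3 * G1 3 (m - 1) :=
          Nat.le_mul_of_pos_left _ (hp 3)
        omega
  -- Lower bound for all k' ≥ 3
  have low : ∀ k', 3 ≤ k' → ∀ m, m ≤ G1 k' m := by
    intro k' hk'
    induction k', hk' using Nat.le_induction with
    | base => exact low3
    | succ k' hk' ihk =>
      intro m
      induction m using Nat.strong_induction_on with
      | _ m ih =>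
        rcases Nat.eq_zero_or_pos m with h | h
        · simp [h, hG10]
        · rw [hG1k (k' + 1) (by omega) m h]
          have hne : {v | ∃ t, 1 ≤ t ∧ t ≤ m ∧
              v = p (k' + 1) * G1 (k' + 1) (m - t) + G1 (k' + 1 - 1) t}.Nonempty := by
            exact ⟨p (k' + 1) * G1 (k' + 1) (m - m) + G1 (k' + 1 - 1) m,
              m, h, le_refl m, rfl⟩
          have hmem := Nat.sInf_mem hne
          obtain ⟨t, ht1, htm, hv⟩ := hmem
          rw [hv]
          have h1 : m - t ≤ G1 (k' + 1) (m - t) := ih (m - t) (by omega)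
          have h2 : G1 (k' + 1) (m - t) ≤ p (k' + 1) * G1 (k' + 1) (m - t) :=
            Nat.le_mul_of_pos_left _ (hp (k' + 1))
          have h3 : t ≤ G1 (k' + 1 - 1) t := by
            simpa using ihk t
          omega
  -- G1 m 1 = 1 for all m ≥ 3
  have one : ∀ m, 3 ≤ m → G1 m 1 = 1 := by
    intro m hm
    induction m, hm using Nat.le_induction with
    | base => rw [hG13 1 le_rfl]; simp [hG10]
    | succ m hm ihm =>
      rw [hG1k (m + 1) (by omega) 1 le_rfl]
      have hset : {v | ∃ t, 1 ≤ t ∧ t ≤ 1 ∧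
          v = p (m + 1) * G1 (m + 1) (1 - t) + G1 (m + 1 - 1) t} = {1} := by
        ext v
        constructor
        · rintro ⟨t, ht1, htm, hv⟩
          have : t = 1 := le_antisymm htm ht1
          subst this
          simp [hv, hG10, ihm]
        · rintro rfl
          exact ⟨1, le_rfl, le_rfl, by simp [hG10, ihm]⟩
      rw [hset]
      simp
  -- upper bound at i₀
  have upi : ∀ m, G1 i₀ m ≤ m := by
    intro m
    induction m with
    | zero => simp [hG10]
    | succ m ihm =>
      rcases Nat.lt_or_ge i₀ 4 with h4 | h4
      · have hi3 : i₀ = 3 := by omega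
        subst hi3
        rw [hG13 (m + 1) (by omega)]
        simp only [Nat.add_sub_cancel]
        rw [hpi₀]
        omega
      · rw [hG1k i₀ h4 (m + 1) (by omega)]
        have hmem : p i₀ * G1 i₀ (m + 1 - 1) + G1 (i₀ - 1) 1 ∈
            {v | ∃ t, 1 ≤ t ∧ t ≤ m + 1 ∧
              v = p i₀ * G1 i₀ (m + 1 - t) + G1 (i₀ - 1) t} :=
          ⟨1, le_rfl, by omega, rfl⟩
        have hle := Nat.sInf_le hmem
        have h1 : G1 (i₀ - 1) 1 = 1 := one (i₀ - 1) (by omega)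
        simp only [Nat.add_sub_cancel] at hle
        have hb : p i₀ * G1 i₀ m + G1 (i₀ - 1) 1 = G1 i₀ m + 1 := by
          rw [hpi₀, one_mul, h1]
        omega
  -- descent: G1 k' ≤ G1 (k'-1) for k' ≥ 4
  have desc : ∀ k', 4 ≤ k' → ∀ m, G1 k' m ≤ G1 (k' - 1) m := by
    intro k' hk' m
    rcases Nat.eq_zero_or_pos m with h | h
    · simp [h, hG10]
    · rw [hG1k k' hk' m h]
      have hmem : p k' * G1 k' (m - m) + G1 (k' - 1) m ∈
          {v | ∃ t, 1 ≤ t ∧ t ≤ m ∧ v = p k' * G1 k' (m - t) + G1 (k' - 1) t} :=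
        ⟨m, h, le_rfl, rfl⟩
      have := Nat.sInf_le hmem
      simpa [hG10] using this
  -- upper bound for all k' ≥ i₀
  have up : ∀ k', i₀ ≤ k' → ∀ m, G1 k' m ≤ m := by
    intro k' hk'
    induction k', hk' using Nat.le_induction with
    | base => exact upi
    | succ k' hk' ihk =>
      intro m
      have hd := desc (k' + 1) (by omega) m
      simp only [Nat.add_sub_cancel] at hd
      exact le_trans hd (ihk m)
  exact le_antisymm (up k hi₀k n) (low k hk n)
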